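/- Let |q| > 1, ρ > 0, and f = Σ_k c_k x^k a polynomial. Then (|q|^{−2}; |q|^{−2})_∞^{n/2} · Σ_k |c_k| ρ^{|k|} ≤ Σ_k |c_k| ([k]_{|q|^{−2}}!/[|k|]_{|q|^{−2}}!)^{1/2} ρ^{|k|} ≤ Σ_k |c_k| ρ^{|k|}. -/

import Mathlib

open Finset

/-- `[m]_q = 1 + q + ⋯ + q^(m-1)`. -/
noncomputable def qNum (s : ℝ) (m : ℕ) : ℝ := ∑ i ∈ Finset.range m, s ^ i

/-- `[m]_q! = [1]_q ⋯ [m]_q`, with `[0]_q! = 1`. -/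
noncomputable def qFact (s : ℝ) (m : ℕ) : ℝ := ∏ i ∈ Finset.range m, qNum s (i + 1)

/-- `[k]_q! = [k₁]_q! ⋯ [kₙ]_q!` for a multi-index `k`. -/
noncomputable def qFactM {n : ℕ} (s : ℝ) (k : Fin n → ℕ) : ℝ := ∏ i, qFact s (k i)

section Aux

variable {s : ℝ}

lemma qNum_pos (hs : 0 < s) {m : ℕ} (hm : 0 < m) : 0 < qNum s m := by
  unfold qNum
  apply Finset.sum_pos (fun i _ => pow_pos hs i)
  exact Finset.nonempty_range_iff.mpr hm.ne'

lemma qNum_mono (hs : 0 < s) {a b : ℕ} (h : a ≤ b) : qNum s a ≤ qNum s b := by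
  unfold qNum
  exact Finset.sum_le_sum_of_subset_of_nonneg (Finset.range_subset_range.mpr h)
    (fun i _ _ => (pow_pos hs i).le)

lemma qFact_pos (hs : 0 < s) (m : ℕ) : 0 < qFact s m :=
  Finset.prod_pos fun i _ => qNum_pos hs i.succ_pos

/-- upper bound building block. -/
lemma qFact_mul_le (hs : 0 < s) (a b : ℕ) : qFact s a * qFact s b ≤ qFact s (a + b) := by
  unfold qFact
  rw [Finset.prod_range_add]
  apply mul_le_mul_of_nonneg_left _ (Finset.prod_nonneg fun i _ => (qNum_pos hs i.succ_pos).le)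
  apply Finset.prod_le_prod (fun i _ => (qNum_pos hs i.succ_pos).le)
  intro i _
  exact qNum_mono hs (by omega)

/-- lower bound building block. -/
lemma qFact_lower (hs0 : 0 < s) (hs1 : s < 1) (a b : ℕ) :
    (∏ j ∈ Finset.range b, (1 - s ^ (j + 1))) * qFact s (a + b) ≤ qFact s a * qFact s b := by
  unfold qFact
  rw [Finset.prod_range_add, ← mul_assoc, mul_comm (∏ j ∈ Finset.range b, (1 - s ^ (j+1))),
    mul_assoc]
  apply mul_le_mul_of_nonneg_left _ (Finset.prod_nonneg fun i _ => (qNum_pos hs0 i.succ_pos).le)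
  rw [← Finset.prod_mul_distrib]
  apply Finset.prod_le_prod
  · intro i _
    have h1 : s ^ (i + 1) ≤ 1 := pow_le_one₀ hs0.le hs1.le
    exact mul_nonneg (by linarith) (qNum_pos hs0 (by omega)).le
  · intro i _
    -- (1 - s^(i+1)) * qNum s (a + (i+1)) ≤ qNum s (i+1)
    have hne : s ≠ 1 := hs1.ne
    have hq : ∀ m : ℕ, qNum s m = (1 - s ^ m) / (1 - s) := by
      intro m
      rw [qNum, geom_sum_eq hne]
      rw [div_eq_div_iff (by intro h; apply hne; linarith) (by intro h; apply hne; linarith)]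
      ring
    rw [hq, hq]
    have hd : (0:ℝ) < 1 - s := by linarith
    rw [mul_div_assoc', div_le_div_iff₀ hd hd]
    have h1 : 0 ≤ s ^ (a + i + 1) := pow_nonneg hs0.le _
    have h2 : s ^ (a + i + 1) ≤ 1 := pow_le_one₀ hs0.le hs1.le
    have h3 : s ^ (i + 1) ≤ 1 := pow_le_one₀ hs0.le hs1.le
    nlinarith [mul_nonneg (mul_nonneg (by linarith : (0:ℝ) ≤ 1 - s ^ (i + 1)) h1) hd.le]

/-- The infimum of all finite partial products of `1 - s^(j+1)`. -/
noncomputable def pInf (s : ℝ) : ℝ := ⨅ S : Finset ℕ, ∏ j ∈ S, (1 - s ^ (j + 1))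

lemma prodFun_nonneg (hs0 : 0 < s) (hs1 : s < 1) (S : Finset ℕ) :
    0 ≤ ∏ j ∈ S, (1 - s ^ (j + 1)) := by
  apply Finset.prod_nonneg
  intro j _
  have := pow_le_one₀ hs0.le hs1.le (n := j + 1)
  linarith

lemma prodFun_antitone (hs0 : 0 < s) (hs1 : s < 1) :
    Antitone (fun S : Finset ℕ => ∏ j ∈ S, (1 - s ^ (j + 1))) := by
  intro S T h
  simp only
  rw [← Finset.prod_sdiff h]
  have h1 : ∏ j ∈ T \ S, (1 - s ^ (j + 1)) ≤ 1 := by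
    apply Finset.prod_le_one
    · intro j _
      have := pow_le_one₀ hs0.le hs1.le (n := j + 1)
      linarith
    · intro j _
      have := pow_pos hs0 (j + 1)
      linarith
  calc (∏ j ∈ T \ S, (1 - s ^ (j + 1))) * ∏ j ∈ S, (1 - s ^ (j + 1))
      ≤ 1 * ∏ j ∈ S, (1 - s ^ (j + 1)) :=
        mul_le_mul_of_nonneg_right h1 (prodFun_nonneg hs0 hs1 S)
    _ = _ := one_mul _

lemma prodFun_bddBelow (hs0 : 0 < s) (hs1 : s < 1) :
    BddBelow (Set.range fun S : Finset ℕ => ∏ j ∈ S, (1 - s ^ (j + 1))) := by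
  refine ⟨0, ?_⟩
  rintro x ⟨S, rfl⟩
  exact prodFun_nonneg hs0 hs1 S

lemma hasProd_pInf (hs0 : 0 < s) (hs1 : s < 1) :
    HasProd (fun j : ℕ => 1 - s ^ (j + 1)) (pInf s) :=
  tendsto_atTop_ciInf (prodFun_antitone hs0 hs1) (prodFun_bddBelow hs0 hs1)

lemma tprod_eq_pInf (hs0 : 0 < s) (hs1 : s < 1) :
    (∏' j : ℕ, (1 - s ^ (j + 1))) = pInf s := (hasProd_pInf hs0 hs1).tprod_eq

lemma pInf_nonneg (hs0 : 0 < s) (hs1 : s < 1) : 0 ≤ pInf s :=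
  le_ciInf fun S => prodFun_nonneg hs0 hs1 S

lemma pInf_le (hs0 : 0 < s) (hs1 : s < 1) (S : Finset ℕ) :
    pInf s ≤ ∏ j ∈ S, (1 - s ^ (j + 1)) :=
  ciInf_le (prodFun_bddBelow hs0 hs1) S

lemma prod_qFact_le (hs0 : 0 < s) {n : ℕ} (k : Fin n → ℕ) (t : Finset (Fin n)) :
    ∏ i ∈ t, qFact s (k i) ≤ qFact s (∑ i ∈ t, k i) := by
  induction t using Finset.cons_induction with
  | empty => simp [qFact]
  | cons a t ha ih =>
    rw [Finset.prod_cons, Finset.sum_cons]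
    calc qFact s (k a) * ∏ i ∈ t, qFact s (k i)
        ≤ qFact s (k a) * qFact s (∑ i ∈ t, k i) :=
          mul_le_mul_of_nonneg_left ih (qFact_pos hs0 _).le
      _ ≤ qFact s (k a + ∑ i ∈ t, k i) := qFact_mul_le hs0 _ _

lemma pInf_pow_mul_qFact_le (hs0 : 0 < s) (hs1 : s < 1) {n : ℕ} (k : Fin n → ℕ)
    (t : Finset (Fin n)) :
    pInf s ^ t.card * qFact s (∑ i ∈ t, k i) ≤ ∏ i ∈ t, qFact s (k i) := by
  induction t using Finset.cons_induction with
  | empty => simp [qFact]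
  | cons a t ha ih =>
    rw [Finset.prod_cons, Finset.sum_cons, Finset.card_cons]
    have hP0 := pInf_nonneg hs0 hs1
    have key : pInf s * qFact s (k a + ∑ i ∈ t, k i) ≤
        qFact s (k a) * qFact s (∑ i ∈ t, k i) := by
      calc pInf s * qFact s (k a + ∑ i ∈ t, k i)
          ≤ (∏ j ∈ Finset.range (∑ i ∈ t, k i), (1 - s ^ (j + 1))) *
              qFact s (k a + ∑ i ∈ t, k i) :=
            mul_le_mul_of_nonneg_right (pInf_le hs0 hs1 _) (qFact_pos hs0 _).le
        _ ≤ qFact s (k a) * qFact s (∑ i ∈ t, k i) := qFact_lower hs0 hs1 _ _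
    calc pInf s ^ (t.card + 1) * qFact s (k a + ∑ i ∈ t, k i)
        = pInf s ^ t.card * (pInf s * qFact s (k a + ∑ i ∈ t, k i)) := by ring
      _ ≤ pInf s ^ t.card * (qFact s (k a) * qFact s (∑ i ∈ t, k i)) :=
          mul_le_mul_of_nonneg_left key (pow_nonneg hP0 _)
      _ = qFact s (k a) * (pInf s ^ t.card * qFact s (∑ i ∈ t, k i)) := by ring
      _ ≤ qFact s (k a) * ∏ i ∈ t, qFact s (k i) :=
          mul_le_mul_of_nonneg_left ih (qFact_pos hs0 _).le

end Aux

/-- For `|q| > 1`, `ρ > 0` and a polynomial `f = Σ_k c_k x^k` (finitely supported `c`), with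
`s = |q|⁻²`:
`(s;s)_∞^(n/2) Σ_k |c_k| ρ^|k| ≤ Σ_k |c_k| ([k]_s!/[|k|]_s!)^(1/2) ρ^|k| ≤ Σ_k |c_k| ρ^|k|`. -/
theorem stmt15 {n : ℕ} (q : ℂ) (hq : 1 < ‖q‖) (ρ : ℝ) (hρ : 0 < ρ)
    (c : (Fin n → ℕ) →₀ ℂ) :
    Real.sqrt ((∏' j : ℕ, (1 - ((‖q‖)⁻¹ ^ 2) ^ (j + 1))) ^ n) *
        ∑ k ∈ c.support, ‖c k‖ * ρ ^ (∑ i, k i) ≤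
      (∑ k ∈ c.support, ‖c k‖ *
        Real.sqrt (qFactM ((‖q‖)⁻¹ ^ 2) k /
          qFact ((‖q‖)⁻¹ ^ 2) (∑ i, k i)) * ρ ^ (∑ i, k i)) ∧
      (∑ k ∈ c.support, ‖c k‖ *
        Real.sqrt (qFactM ((‖q‖)⁻¹ ^ 2) k /
          qFact ((‖q‖)⁻¹ ^ 2) (∑ i, k i)) * ρ ^ (∑ i, k i)) ≤
      ∑ k ∈ c.support, ‖c k‖ * ρ ^ (∑ i, k i) := by
  set s : ℝ := (‖q‖)⁻¹ ^ 2 with hs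
  have hq0 : 0 < ‖q‖ := lt_trans one_pos hq
  have hs0 : 0 < s := pow_pos (inv_pos.mpr hq0) 2
  have hs1 : s < 1 := by
    have : (‖q‖)⁻¹ < 1 := inv_lt_one_of_one_lt₀ hq
    calc s < 1 ^ 2 := by
          apply pow_lt_pow_left₀ this (inv_pos.mpr hq0).le
          norm_num
      _ = 1 := one_pow 2
  have htprod : (∏' j : ℕ, (1 - s ^ (j + 1))) = pInf s := tprod_eq_pInf hs0 hs1
  have hP0 : 0 ≤ pInf s := pInf_nonneg hs0 hs1
  constructor
  · -- lower bound
    rw [htprod, Finset.mul_sum]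
    apply Finset.sum_le_sum
    intro k _
    have hratio : pInf s ^ n ≤ qFactM s k / qFact s (∑ i, k i) := by
      rw [le_div_iff₀ (qFact_pos hs0 _)]
      have := pInf_pow_mul_qFact_le hs0 hs1 k Finset.univ
      simpa [qFactM, Finset.card_univ] using this
    have hsq : Real.sqrt (pInf s ^ n) ≤
        Real.sqrt (qFactM s k / qFact s (∑ i, k i)) := Real.sqrt_le_sqrt hratio
    calc Real.sqrt (pInf s ^ n) * (‖c k‖ * ρ ^ (∑ i, k i))
        = ‖c k‖ * Real.sqrt (pInf s ^ n) * ρ ^ (∑ i, k i) := by ring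
      _ ≤ ‖c k‖ * Real.sqrt (qFactM s k / qFact s (∑ i, k i)) *
            ρ ^ (∑ i, k i) := by
          apply mul_le_mul_of_nonneg_right _ (pow_pos hρ _).le
          exact mul_le_mul_of_nonneg_left hsq (norm_nonneg _)
  · -- upper bound
    apply Finset.sum_le_sum
    intro k _
    have hratio : qFactM s k / qFact s (∑ i, k i) ≤ 1 := by
      rw [div_le_one (qFact_pos hs0 _)]
      have := prod_qFact_le hs0 k Finset.univ
      simpa [qFactM] using this
    have hsq : Real.sqrt (qFactM s k / qFact s (∑ i, k i)) ≤ 1 := by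
      calc Real.sqrt (qFactM s k / qFact s (∑ i, k i)) ≤ Real.sqrt 1 :=
            Real.sqrt_le_sqrt hratio
        _ = 1 := Real.sqrt_one
    calc ‖c k‖ * Real.sqrt (qFactM s k / qFact s (∑ i, k i)) * ρ ^ (∑ i, k i)
        ≤ ‖c k‖ * 1 * ρ ^ (∑ i, k i) := by
          apply mul_le_mul_of_nonneg_right _ (pow_pos hρ _).le
          exact mul_le_mul_of_nonneg_left hsq (norm_nonneg _)
      _ = ‖c k‖ * ρ ^ (∑ i, k i) := by ring
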